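/- Finite zero-sum game minimax (von Neumann, expressed for the ratio matrix): For any R : S × P → ℝ with S, P nonempty finite sets, sup over distributions g on P of (min_s ∑_p g(p) R(s,p)) equals inf over distributions f on S of (max_p ∑_s f(s) R(s,p)); i.e., the lower bound from Yao's principle is always tight in the finite case. -/

import Mathlib

open Finset

/-- Separation step: given the value `v` which lower-bounds all row-player payoffs,
for every `ε > 0` there is a distribution `g` on `P` guaranteeing `v - ε`. -/
private lemma minimax_key {S P : Type*} [Fintype S] [Fintype P] [Nonempty S] [Nonempty P]
    (R : S → P → ℝ) (v ε : ℝ) (hε : 0 < ε)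
    (hv : ∀ f : S → ℝ, (∀ s, 0 ≤ f s) → ∑ s, f s = 1 →
      v ≤ Finset.univ.sup' Finset.univ_nonempty (fun p => ∑ s, f s * R s p)) :
    ∃ g : P → ℝ, (∀ p, 0 ≤ g p) ∧ ∑ p, g p = 1 ∧ ∀ s, v - ε ≤ ∑ p, g p * R s p := by
  classical
  -- the linear "payoff" map
  let L : (S → ℝ) →ₗ[ℝ] (P → ℝ) :=
    { toFun := fun f p => ∑ s, f s * R s p
      map_add' := by
        intro f g; funext p; simp [add_mul, Finset.sum_add_distrib]
      map_smul' := by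
        intro c f; funext p; simp [Finset.mul_sum, mul_assoc] }
  have hLdef : ∀ f p, L f p = ∑ s, f s * R s p := fun f p => rfl
  let B : Set (P → ℝ) := L '' stdSimplex ℝ S
  let Q : Set (P → ℝ) := {x | ∀ p, x p ≤ v - ε}
  have hBconv : Convex ℝ B := (convex_stdSimplex ℝ S).linear_image L
  have hBcomp : IsCompact B := (isCompact_stdSimplex ℝ S).image L.continuous_of_finiteDimensional
  have hQconv : Convex ℝ Q := by
    intro x hx y hy a b ha hb hab p
    have h1 : a * x p ≤ a * (v - ε) := mul_le_mul_of_nonneg_left (hx p) ha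
    have h2 : b * y p ≤ b * (v - ε) := mul_le_mul_of_nonneg_left (hy p) hb
    have : (a • x + b • y) p = a * x p + b * y p := rfl
    rw [this]
    calc a * x p + b * y p ≤ a * (v - ε) + b * (v - ε) := by linarith
      _ = (a + b) * (v - ε) := by ring
      _ = v - ε := by rw [hab]; ring
  have hQclosed : IsClosed Q := by
    have : Q = ⋂ p, {x : P → ℝ | x p ≤ v - ε} := by
      ext x; simp [Q, Set.mem_iInter]
    rw [this]
    exact isClosed_iInter fun p => isClosed_le (continuous_apply p) continuous_const
  have hdisj : Disjoint B Q := by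
    rw [Set.disjoint_left]
    rintro x ⟨f, hf, rfl⟩ hxQ
    have h1 : v ≤ Finset.univ.sup' Finset.univ_nonempty (fun p => ∑ s, f s * R s p) :=
      hv f hf.1 hf.2
    have h2 : Finset.univ.sup' Finset.univ_nonempty (fun p => ∑ s, f s * R s p) ≤ v - ε :=
      Finset.sup'_le _ _ fun p _ => hxQ p
    linarith
  obtain ⟨φ, u, w, hB, huw, hQ⟩ :=
    geometric_hahn_banach_compact_closed hBconv hBcomp hQconv hQclosed hdisj
  set g₀ : P → ℝ := fun p => φ (Pi.single p (1 : ℝ)) with hg₀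
  have hφ : ∀ x : P → ℝ, φ x = ∑ p, x p * g₀ p := by
    intro x
    have hx : x = ∑ p, x p • (Pi.single p (1 : ℝ) : P → ℝ) := by
      funext q
      simp [Pi.single_apply, Finset.sum_ite_eq']
    conv_lhs => rw [hx]
    rw [map_sum]
    exact Finset.sum_congr rfl fun p _ => by rw [map_smul]; rfl
  -- the constant point in Q
  have hq₀ : (fun _ : P => v - ε) ∈ Q := fun p => le_refl _
  have hQq₀ := hQ _ hq₀
  -- every coordinate of g₀ is nonpositive
  have hg₀le : ∀ p, g₀ p ≤ 0 := by
    intro p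
    by_contra h
    push_neg at h
    set t : ℝ := (φ (fun _ : P => v - ε) - w + 1) / g₀ p with ht
    have htpos : 0 < t := div_pos (by linarith) h
    have hmem : ((fun _ : P => v - ε) - t • (Pi.single p (1 : ℝ) : P → ℝ)) ∈ Q := by
      intro q
      by_cases hq : q = p
      · subst hq
        have : ((fun _ : P => v - ε) - t • (Pi.single q (1 : ℝ) : P → ℝ)) q = v - ε - t := by
          simp
        rw [this]; linarith
      · have : ((fun _ : P => v - ε) - t • (Pi.single p (1 : ℝ) : P → ℝ)) q = v - ε := by
          simp [Pi.single_apply, hq]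
        rw [this]
    have := hQ _ hmem
    rw [map_sub, map_smul] at this
    have hts : t * g₀ p = φ (fun _ : P => v - ε) - w + 1 := by
      rw [ht]; field_simp
    have h2 : w < φ (fun _ : P => v - ε) - t * φ (Pi.single p (1 : ℝ)) := this
    have hgp : φ (Pi.single p (1 : ℝ)) = g₀ p := rfl
    rw [hgp, hts] at h2
    linarith
  -- rows are in B
  have hrow : ∀ s, φ (fun p => R s p) < u := by
    intro s
    have hδ : Pi.single s (1 : ℝ) ∈ stdSimplex ℝ S := by
      constructor
      · intro x
        by_cases hx : x = s <;> simp [Pi.single_apply, hx]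
      · simp
    have hLδ : L (Pi.single s (1 : ℝ)) = fun p => R s p := by
      funext p
      rw [hLdef]
      simp [Pi.single_apply, Finset.sum_ite_eq']
    have := hB _ ⟨_, hδ, hLδ⟩
    exact this
  -- build the distribution
  set h : P → ℝ := fun p => -g₀ p with hh
  have hhnn : ∀ p, 0 ≤ h p := fun p => by simp [hh]; exact hg₀le p
  set G : ℝ := ∑ p, h p with hG
  have hGnn : 0 ≤ G := Finset.sum_nonneg fun p _ => hhnn p
  have hφq₀ : φ (fun _ : P => v - ε) = (v - ε) * ∑ p, g₀ p := by
    rw [hφ, Finset.mul_sum]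
  have hGpos : 0 < G := by
    rcases hGnn.lt_or_eq with h' | h'
    · exact h'
    · exfalso
      have hall : ∀ p ∈ Finset.univ, h p = 0 :=
        (Finset.sum_eq_zero_iff_of_nonneg fun p _ => hhnn p).1 h'.symm
      have hg0 : ∀ p, g₀ p = 0 := by
        intro p
        have := hall p (Finset.mem_univ p)
        simp [hh] at this
        linarith [this]
      obtain ⟨s⟩ := ‹Nonempty S›
      have h1 := hrow s
      rw [hφ] at h1
      rw [hφq₀] at hQq₀
      simp [hg0] at h1 hQq₀
      linarith
  refine ⟨fun p => h p / G, fun p => div_nonneg (hhnn p) hGnn, ?_, ?_⟩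
  · rw [← Finset.sum_div, ← hG, div_self hGpos.ne']
  · intro s
    have h1 : φ (fun p => R s p) < (v - ε) * ∑ p, g₀ p := by
      have := hrow s
      rw [hφq₀] at hQq₀
      linarith
    rw [hφ] at h1
    have h2 : ∑ p, g₀ p = -G := by
      rw [hG]; simp [hh]
    rw [h2] at h1
    have h3 : ∑ p, h p / G * R s p = (∑ p, h p * R s p) / G := by
      rw [Finset.sum_div]
      exact Finset.sum_congr rfl fun p _ => by ring
    rw [h3, le_div_iff₀ hGpos]
    have h4 : ∑ p, h p * R s p = -∑ p, R s p * g₀ p := by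
      rw [← Finset.sum_neg_distrib]
      exact Finset.sum_congr rfl fun p _ => by simp [hh]; ring
    rw [h4]
    nlinarith

theorem finite_minimax_theorem {S P : Type*} [Fintype S] [Fintype P] [Nonempty S] [Nonempty P]
    (R : S → P → ℝ) :
    (⨆ g : {g : P → ℝ // (∀ p, 0 ≤ g p) ∧ ∑ p, g p = 1},
        Finset.univ.inf' Finset.univ_nonempty (fun s => ∑ p, g.1 p * R s p)) =
    (⨅ f : {f : S → ℝ // (∀ s, 0 ≤ f s) ∧ ∑ s, f s = 1},
        Finset.univ.sup' Finset.univ_nonempty (fun p => ∑ s, f.1 s * R s p)) := by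
  classical
  set m : ℝ := Finset.univ.inf' Finset.univ_nonempty
    (fun s => Finset.univ.inf' (Finset.univ_nonempty (α := P)) (fun p => R s p)) with hm
  set M : ℝ := Finset.univ.sup' Finset.univ_nonempty
    (fun s => Finset.univ.sup' (Finset.univ_nonempty (α := P)) (fun p => R s p)) with hM
  have hmR : ∀ s p, m ≤ R s p := fun s p =>
    le_trans (Finset.inf'_le (fun s => Finset.univ.inf' (Finset.univ_nonempty (α := P))
      (fun p => R s p)) (Finset.mem_univ s)) (Finset.inf'_le (fun p => R s p) (Finset.mem_univ p))
  have hMR : ∀ s p, R s p ≤ M := fun s p =>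
    le_trans (Finset.le_sup' (fun p => R s p) (Finset.mem_univ p))
      (Finset.le_sup' (fun s => Finset.univ.sup' (Finset.univ_nonempty (α := P)) (fun p => R s p))
        (Finset.mem_univ s))
  obtain ⟨s₀⟩ := ‹Nonempty S›
  obtain ⟨p₀⟩ := ‹Nonempty P›
  -- bounds on the two ranges
  have hbddA : BddAbove (Set.range fun g : {g : P → ℝ // (∀ p, 0 ≤ g p) ∧ ∑ p, g p = 1} =>
      Finset.univ.inf' Finset.univ_nonempty (fun s => ∑ p, g.1 p * R s p)) := by
    refine ⟨M, ?_⟩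
    rintro x ⟨g, rfl⟩
    refine le_trans (Finset.inf'_le _ (Finset.mem_univ s₀)) ?_
    calc ∑ p, g.1 p * R s₀ p ≤ ∑ p, g.1 p * M :=
          Finset.sum_le_sum fun p _ => mul_le_mul_of_nonneg_left (hMR s₀ p) (g.2.1 p)
      _ = M := by rw [← Finset.sum_mul, g.2.2, one_mul]
  have hbddB : BddBelow (Set.range fun f : {f : S → ℝ // (∀ s, 0 ≤ f s) ∧ ∑ s, f s = 1} =>
      Finset.univ.sup' Finset.univ_nonempty (fun p => ∑ s, f.1 s * R s p)) := by
    refine ⟨m, ?_⟩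
    rintro x ⟨f, rfl⟩
    refine le_trans ?_ (Finset.le_sup' _ (Finset.mem_univ p₀))
    calc m = ∑ s, f.1 s * m := by rw [← Finset.sum_mul, f.2.2, one_mul]
      _ ≤ ∑ s, f.1 s * R s p₀ :=
          Finset.sum_le_sum fun s _ => mul_le_mul_of_nonneg_left (hmR s p₀) (f.2.1 s)
  have hnA : Nonempty {g : P → ℝ // (∀ p, 0 ≤ g p) ∧ ∑ p, g p = 1} := by
    refine ⟨⟨fun _ => (Fintype.card P : ℝ)⁻¹, fun p => by positivity, ?_⟩⟩
    rw [Finset.sum_const, Finset.card_univ, nsmul_eq_mul]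
    have : (Fintype.card P : ℝ) ≠ 0 := Nat.cast_ne_zero.2 Fintype.card_ne_zero
    field_simp
  have hnB : Nonempty {f : S → ℝ // (∀ s, 0 ≤ f s) ∧ ∑ s, f s = 1} := by
    refine ⟨⟨fun _ => (Fintype.card S : ℝ)⁻¹, fun s => by positivity, ?_⟩⟩
    rw [Finset.sum_const, Finset.card_univ, nsmul_eq_mul]
    have : (Fintype.card S : ℝ) ≠ 0 := Nat.cast_ne_zero.2 Fintype.card_ne_zero
    field_simp
  apply le_antisymm
  · -- weak duality
    apply ciSup_le
    intro g
    apply le_ciInf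
    intro f
    have h1 : Finset.univ.inf' Finset.univ_nonempty (fun s => ∑ p, g.1 p * R s p)
        ≤ ∑ s, f.1 s * ∑ p, g.1 p * R s p := by
      calc Finset.univ.inf' Finset.univ_nonempty (fun s => ∑ p, g.1 p * R s p)
          = ∑ s, f.1 s * Finset.univ.inf' Finset.univ_nonempty (fun s => ∑ p, g.1 p * R s p) := by
            rw [← Finset.sum_mul, f.2.2, one_mul]
        _ ≤ ∑ s, f.1 s * ∑ p, g.1 p * R s p :=
            Finset.sum_le_sum fun s _ =>
              mul_le_mul_of_nonneg_left (Finset.inf'_le _ (Finset.mem_univ s)) (f.2.1 s)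
    have h2 : ∑ s, f.1 s * ∑ p, g.1 p * R s p = ∑ p, g.1 p * ∑ s, f.1 s * R s p := by
      simp_rw [Finset.mul_sum]
      rw [Finset.sum_comm]
      exact Finset.sum_congr rfl fun p _ => Finset.sum_congr rfl fun s _ => by ring
    have h3 : ∑ p, g.1 p * ∑ s, f.1 s * R s p
        ≤ Finset.univ.sup' Finset.univ_nonempty (fun p => ∑ s, f.1 s * R s p) := by
      calc ∑ p, g.1 p * ∑ s, f.1 s * R s p
          ≤ ∑ p, g.1 p * Finset.univ.sup' Finset.univ_nonempty (fun p => ∑ s, f.1 s * R s p) :=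
            Finset.sum_le_sum fun p _ =>
              mul_le_mul_of_nonneg_left
                (Finset.le_sup' (fun p => ∑ s, f.1 s * R s p) (Finset.mem_univ p)) (g.2.1 p)
        _ = _ := by rw [← Finset.sum_mul, g.2.2, one_mul]
    linarith
  · -- strong duality via separation
    set v : ℝ := ⨅ f : {f : S → ℝ // (∀ s, 0 ≤ f s) ∧ ∑ s, f s = 1},
        Finset.univ.sup' Finset.univ_nonempty (fun p => ∑ s, f.1 s * R s p) with hv
    have key : ∀ ε : ℝ, 0 < ε → v - ε ≤
        ⨆ g : {g : P → ℝ // (∀ p, 0 ≤ g p) ∧ ∑ p, g p = 1},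
          Finset.univ.inf' Finset.univ_nonempty (fun s => ∑ p, g.1 p * R s p) := by
      intro ε hε
      obtain ⟨g, hg1, hg2, hg3⟩ := minimax_key R v ε hε (fun f hf1 hf2 =>
        ciInf_le hbddB (⟨f, hf1, hf2⟩ : {f : S → ℝ // (∀ s, 0 ≤ f s) ∧ ∑ s, f s = 1}))
      refine le_trans ?_ (le_ciSup hbddA (⟨g, hg1, hg2⟩ :
        {g : P → ℝ // (∀ p, 0 ≤ g p) ∧ ∑ p, g p = 1}))
      exact Finset.le_inf' _ _ fun s _ => hg3 s
    by_contra hcon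
    push_neg at hcon
    have hε : 0 < (v - (⨆ g : {g : P → ℝ // (∀ p, 0 ≤ g p) ∧ ∑ p, g p = 1},
        Finset.univ.inf' Finset.univ_nonempty (fun s => ∑ p, g.1 p * R s p))) / 2 := by
      linarith
    have := key _ hε
    linarith
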